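/- arXiv:1607.02111 — 3 statements merged into one kernel-verified Lean document; each statement's English description precedes it below -/
import Mathlib

section
/- For each integer k ≥ 0, the function x ↦ k! π^{-k} L_k^{n/2-1}(π‖x‖²) e^{-π‖x‖²} on R^n has Fourier transform u ↦ ‖u‖^{2k} e^{-π‖u‖²}, where L_k^{n/2-1} is the Laguerre polynomial of degree k with parameter n/2 - 1. -/
open MeasureTheory Metric
open scoped FourierTransform Real RealInnerProductSpace

/-- The generalized Laguerre polynomial `L_k^α`, given by
`L_k^α(x) = ∑_{j=0}^k (-1)^j (α+j+1)⋯(α+k)/((k-j)!) · x^j / j!`. -/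
noncomputable def genLaguerre (α : ℝ) (k : ℕ) (x : ℝ) : ℝ :=
  ∑ j ∈ Finset.range (k + 1),
    (-1 : ℝ) ^ j * ((∏ i ∈ Finset.range (k - j), (α + j + 1 + i)) / (Nat.factorial (k - j)))
      * x ^ j / (Nat.factorial j)

section IntegrabilityAux

lemma pow_le_factorial_mul_exp (m : ℕ) {t : ℝ} (ht : 0 ≤ t) :
    t ^ m ≤ (m.factorial : ℝ) * Real.exp t := by
  have h1 : t ^ m / (m.factorial : ℝ) ≤ ∑ i ∈ Finset.range (m + 1), t ^ i / i.factorial := by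
    refine Finset.single_le_sum (f := fun i => t ^ i / (i.factorial : ℝ)) ?_ ?_
    · intro i _
      positivity
    · simp
  have h2 := Real.sum_le_exp_of_nonneg ht (m + 1)
  have h3 : t ^ m / (m.factorial : ℝ) ≤ Real.exp t := le_trans h1 h2
  have hm : (0:ℝ) < (m.factorial : ℝ) := by positivity
  calc t ^ m = t ^ m / (m.factorial : ℝ) * m.factorial := by field_simp
    _ ≤ Real.exp t * m.factorial := by
        exact mul_le_mul_of_nonneg_right h3 hm.le
    _ = (m.factorial : ℝ) * Real.exp t := by ring

lemma norm_pow_mul_exp_bound (m : ℕ) {a : ℝ} (ha : 0 < a) (x : ℝ) (hx : 0 ≤ x) :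
    x ^ m * Real.exp (-a * x ^ 2)
      ≤ ((m.factorial : ℝ) * (2 / a) ^ m * Real.exp (a / 2)) * Real.exp (-(a / 2) * x ^ 2) := by
  have key : x ^ m ≤ (m.factorial : ℝ) * (2 / a) ^ m * Real.exp (a / 2)
      * Real.exp ((a / 2) * x ^ 2) := by
    have h0 : x ≤ 1 + x ^ 2 := by nlinarith [sq_nonneg (x - 1)]
    have h1 : x ^ m ≤ (1 + x ^ 2) ^ m := pow_le_pow_left₀ hx h0 m
    have h2 : ((a / 2) * (1 + x ^ 2)) ^ m
        ≤ (m.factorial : ℝ) * Real.exp ((a / 2) * (1 + x ^ 2)) :=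
      pow_le_factorial_mul_exp m (by positivity)
    have h3 : (1 + x ^ 2) ^ m = ((a / 2) * (1 + x ^ 2)) ^ m * (2 / a) ^ m := by
      rw [← mul_pow]
      congr 1
      field_simp
    have h4 : Real.exp ((a / 2) * (1 + x ^ 2))
        = Real.exp (a / 2) * Real.exp ((a / 2) * x ^ 2) := by
      rw [← Real.exp_add]; ring_nf
    calc x ^ m ≤ (1 + x ^ 2) ^ m := h1
      _ = ((a / 2) * (1 + x ^ 2)) ^ m * (2 / a) ^ m := h3
      _ ≤ (m.factorial : ℝ) * Real.exp ((a / 2) * (1 + x ^ 2)) * (2 / a) ^ m := by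
          apply mul_le_mul_of_nonneg_right h2 (by positivity)
      _ = (m.factorial : ℝ) * (2 / a) ^ m * Real.exp (a / 2) * Real.exp ((a / 2) * x ^ 2) := by
          rw [h4]; ring
  calc x ^ m * Real.exp (-a * x ^ 2)
      ≤ ((m.factorial : ℝ) * (2 / a) ^ m * Real.exp (a / 2) * Real.exp ((a / 2) * x ^ 2))
          * Real.exp (-a * x ^ 2) := by
        apply mul_le_mul_of_nonneg_right key (Real.exp_pos _).le
    _ = ((m.factorial : ℝ) * (2 / a) ^ m * Real.exp (a / 2)) * Real.exp (-(a / 2) * x ^ 2) := by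
        rw [mul_assoc, ← Real.exp_add]
        ring_nf

variable {V : Type*} [NormedAddCommGroup V] [InnerProductSpace ℝ V] [FiniteDimensional ℝ V]
  [MeasurableSpace V] [BorelSpace V]

lemma integrable_exp_neg_mul_sq_norm {a : ℝ} (ha : 0 < a) :
    Integrable (fun v : V => Real.exp (-a * ‖v‖ ^ 2)) := by
  have h := (GaussianFourier.integrable_cexp_neg_mul_sq_norm_add (V := V)
      (b := (a : ℂ)) (by simpa using ha) 0 0).norm
  have : (fun v : V => ‖Complex.exp (-(a:ℂ) * (‖v‖:ℂ) ^ 2 + 0 * (inner ℝ (0:V) v : ℝ))‖)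
      = fun v : V => Real.exp (-a * ‖v‖ ^ 2) := by
    funext v
    have hz : (-(a:ℂ) * (‖v‖:ℂ) ^ 2 + 0 * ((inner ℝ (0:V) v : ℝ):ℂ)) = ((-a * ‖v‖ ^ 2 : ℝ) : ℂ) := by
      push_cast; ring
    rw [hz, Complex.norm_exp, Complex.ofReal_re]
  rwa [this] at h

lemma integrable_pow_mul_exp_neg_mul_sq_norm (m : ℕ) {a : ℝ} (ha : 0 < a) :
    Integrable (fun v : V => ‖v‖ ^ m * Real.exp (-a * ‖v‖ ^ 2)) := by
  have hg : Integrable (fun v : V =>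
      ((m.factorial : ℝ) * (2 / a) ^ m * Real.exp (a / 2)) * Real.exp (-(a / 2) * ‖v‖ ^ 2)) :=
    (integrable_exp_neg_mul_sq_norm (by positivity)).const_mul _
  refine hg.mono' ?_ ?_
  · exact (Continuous.aestronglyMeasurable (by continuity))
  · refine Filter.Eventually.of_forall fun v => ?_
    rw [Real.norm_eq_abs, abs_of_nonneg (by positivity)]
    exact norm_pow_mul_exp_bound m ha ‖v‖ (norm_nonneg v)


end IntegrabilityAux

namespace LagAux

lemma genLaguerre_zero (α : ℝ) (x : ℝ) : genLaguerre α 0 x = 1 := by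
  simp [genLaguerre]

noncomputable def C (α : ℝ) (k j : ℕ) : ℝ :=
  (-1 : ℝ) ^ j * ((∏ i ∈ Finset.range (k - j), (α + j + 1 + i)) / (Nat.factorial (k - j)))
    / (Nat.factorial j)

lemma E3 (α : ℝ) (k : ℕ) : ((k : ℝ) + 1) * C α (k + 1) 0 = (α + k + 1) * C α k 0 := by
  simp only [C, Nat.sub_zero, pow_zero, Nat.factorial_zero, Nat.cast_zero, one_mul, div_one,
    Nat.factorial_succ, Finset.prod_range_succ]
  have h1 : ((k + 1).factorial : ℝ) ≠ 0 := Nat.cast_ne_zero.mpr (Nat.factorial_ne_zero _)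
  have h2 : ((k).factorial : ℝ) ≠ 0 := Nat.cast_ne_zero.mpr (Nat.factorial_ne_zero _)
  push_cast
  field_simp
  ring

lemma E2 (α : ℝ) (k : ℕ) (x : ℝ) :
    ((k : ℝ) + 1) * C α (k + 1) (k + 1) * x ^ (k + 1) + C α k k * x ^ (k + 1) = 0 := by
  simp only [C, Nat.sub_self, Finset.range_zero, Finset.prod_empty, Nat.factorial_zero]
  have h2 : ((k).factorial : ℝ) ≠ 0 := Nat.cast_ne_zero.mpr (Nat.factorial_ne_zero _)
  rw [Nat.factorial_succ]
  push_cast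
  field_simp
  ring

lemma E1 (α : ℝ) (k j : ℕ) (x : ℝ) (hj : j + 1 ≤ k) :
    ((k : ℝ) + 1) * C α (k + 1) (j + 1) * x ^ (j + 1) + C α k j * x ^ (j + 1)
      = (α + k + 1 + (j + 1)) * C α k (j + 1) * x ^ (j + 1) := by
  obtain ⟨d, rfl⟩ := Nat.exists_eq_add_of_le hj
  set P : ℝ := ∏ i ∈ Finset.range d, (α + (j + 1 : ℕ) + 1 + i) with hP
  have hs1 : j + 1 + d + 1 - (j + 1) = d + 1 := by omega
  have hs2 : j + 1 + d - (j + 1) = d := by omega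
  have hs3 : j + 1 + d - j = d + 1 := by omega
  have hP1 : (∏ i ∈ Finset.range (d + 1), (α + (j + 1 : ℕ) + 1 + i))
      = P * (α + (j + 1 + d : ℕ) + 1) := by
    rw [Finset.prod_range_succ, hP]
    push_cast; ring
  have hP3 : (∏ i ∈ Finset.range (d + 1), (α + (j : ℕ) + 1 + i))
      = P * (α + j + 1) := by
    rw [Finset.prod_range_succ', hP]
    congr 1
    · exact Finset.prod_congr rfl fun i _ => by push_cast; ring
    · push_cast; ring
  simp only [C, hs1, hs2, hs3]
  rw [hP1, hP3, ← hP]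
  have h1 : ((j + 1).factorial : ℝ) ≠ 0 := Nat.cast_ne_zero.mpr (Nat.factorial_ne_zero _)
  have h2 : ((j).factorial : ℝ) ≠ 0 := Nat.cast_ne_zero.mpr (Nat.factorial_ne_zero _)
  have h3 : ((d).factorial : ℝ) ≠ 0 := Nat.cast_ne_zero.mpr (Nat.factorial_ne_zero _)
  have h4 : ((d + 1).factorial : ℝ) ≠ 0 := Nat.cast_ne_zero.mpr (Nat.factorial_ne_zero _)
  rw [Nat.factorial_succ j, Nat.factorial_succ d]
  push_cast
  field_simp
  ring

lemma key (α : ℝ) (k : ℕ) (x : ℝ) :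
    (∑ j ∈ Finset.range (k + 2), ((k : ℝ) + 1) * C α (k + 1) j * x ^ j)
      + ∑ j ∈ Finset.range (k + 1), C α k j * x ^ (j + 1)
      = ∑ j ∈ Finset.range (k + 1), (α + k + 1 + j) * C α k j * x ^ j := by
  rw [Finset.sum_range_succ' (fun j => ((k : ℝ) + 1) * C α (k + 1) j * x ^ j) (k + 1)]
  rw [Finset.sum_range_succ' (fun j => (α + (k : ℝ) + 1 + j) * C α k j * x ^ j) k]
  rw [add_right_comm, ← Finset.sum_add_distrib]
  rw [Finset.sum_range_succ]
  rw [E2 α k x]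
  rw [add_zero]
  have : ∀ j ∈ Finset.range k,
      ((k : ℝ) + 1) * C α (k + 1) (j + 1) * x ^ (j + 1) + C α k j * x ^ (j + 1)
        = (α + (k : ℝ) + 1 + (j + 1 : ℕ)) * C α k (j + 1) * x ^ (j + 1) := by
    intro j hj
    have := E1 α k j x (by simpa using Nat.succ_le_of_lt (Finset.mem_range.mp hj))
    push_cast at this ⊢
    linarith [this]
  rw [Finset.sum_congr rfl this]
  simp only [pow_zero, mul_one, Nat.cast_zero, add_zero]
  rw [E3 α k]

lemma genLaguerre_eq (α : ℝ) (k : ℕ) (x : ℝ) :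
    genLaguerre α k x = ∑ j ∈ Finset.range (k + 1), C α k j * x ^ j := by
  unfold genLaguerre C
  exact Finset.sum_congr rfl fun j _ => by ring

noncomputable def D (α : ℝ) (k : ℕ) (x : ℝ) : ℝ :=
  ∑ j ∈ Finset.range (k + 1), C α k j * (j * x ^ (j - 1))

lemma hasDerivAt_genLaguerre (α : ℝ) (k : ℕ) (x : ℝ) :
    HasDerivAt (genLaguerre α k) (D α k x) x := by
  have heq : genLaguerre α k = fun x => ∑ j ∈ Finset.range (k + 1), C α k j * x ^ j :=
    funext (genLaguerre_eq α k)
  rw [heq]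
  exact HasDerivAt.fun_sum fun j _ => (hasDerivAt_pow j x).const_mul _

lemma lag_rec (α : ℝ) (k : ℕ) (x : ℝ) :
    ((k : ℝ) + 1) * genLaguerre α (k + 1) x
      = (α + k + 1 - x) * genLaguerre α k x + x * D α k x := by
  have hD : x * D α k x = ∑ j ∈ Finset.range (k + 1), (j : ℝ) * C α k j * x ^ j := by
    rw [D, Finset.mul_sum]
    refine Finset.sum_congr rfl fun j _ => ?_
    rcases j with _ | m
    · simp
    · simp only [Nat.add_sub_cancel]
      push_cast
      ring
  have hxL : x * genLaguerre α k x = ∑ j ∈ Finset.range (k + 1), C α k j * x ^ (j + 1) := by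
    rw [genLaguerre_eq, Finset.mul_sum]
    exact Finset.sum_congr rfl fun j _ => by ring
  have eqL := genLaguerre_eq α k x
  have eqL1 := genLaguerre_eq α (k + 1) x
  have hkey := key α k x
  have hmul1 : ((k : ℝ) + 1) * ∑ j ∈ Finset.range (k + 1 + 1), C α (k + 1) j * x ^ j
      = ∑ j ∈ Finset.range (k + 2), ((k : ℝ) + 1) * C α (k + 1) j * x ^ j := by
    rw [Finset.mul_sum]; exact Finset.sum_congr rfl fun j _ => by ring
  have hmul2 : (α + (k : ℝ) + 1) * ∑ j ∈ Finset.range (k + 1), C α k j * x ^ j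
      = ∑ j ∈ Finset.range (k + 1), (α + (k : ℝ) + 1) * (C α k j * x ^ j) := by
    rw [Finset.mul_sum]
  have hsplit : ∑ j ∈ Finset.range (k + 1), (α + (k : ℝ) + 1 + j) * C α k j * x ^ j
      = (∑ j ∈ Finset.range (k + 1), (α + (k : ℝ) + 1) * (C α k j * x ^ j))
        + ∑ j ∈ Finset.range (k + 1), (j : ℝ) * C α k j * x ^ j := by
    rw [← Finset.sum_add_distrib]
    exact Finset.sum_congr rfl fun j _ => by ring
  linear_combination ((k : ℝ) + 1) * eqL1 + hmul1 - (α + (k : ℝ) + 1) * eqL - hmul2 + hxL - hD + hkey + hsplit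


noncomputable def Phi (ν c : ℝ) (k : ℕ) (b : ℝ) : ℝ :=
  (k.factorial : ℝ) * (π / b) ^ ν * b ^ (-(k : ℤ)) * genLaguerre (ν - 1) k (c / b)
    * Real.exp (-(c / b))

lemma hasDerivAt_Phi (ν c : ℝ) (k : ℕ) {b : ℝ} (hb : 0 < b) :
    HasDerivAt (fun b' : ℝ => Phi ν c k b') (-Phi ν c (k + 1) b) b := by
  have hbne : b ≠ 0 := hb.ne'
  have hπb : (0:ℝ) < π / b := div_pos Real.pi_pos hb
  -- derivative of b ↦ (π/b)^ν
  have h1 : HasDerivAt (fun b' : ℝ => (π / b') ^ ν) (-(ν / b) * (π / b) ^ ν) b := by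
    have hd : HasDerivAt (fun b' : ℝ => π / b') (-(π / b ^ 2)) b := by
      simpa [div_eq_mul_inv, mul_comm] using (hasDerivAt_inv hbne).const_mul π
    have := hd.rpow_const (p := ν) (Or.inl hπb.ne')
    convert this using 1
    rw [Real.rpow_sub_one hπb.ne']
    field_simp
  -- derivative of b ↦ b ^ (-(k:ℤ))
  have h2 : HasDerivAt (fun b' : ℝ => b' ^ (-(k : ℤ))) ((-(k:ℝ)) * (b ^ (-(k : ℤ)) * b⁻¹)) b := by
    have := hasDerivAt_zpow (-(k : ℤ)) b (Or.inl hbne)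
    refine this.congr_deriv ?_
    rw [zpow_sub_one₀ hbne]
    push_cast
    ring
  -- derivative of b ↦ c / b
  have h3 : HasDerivAt (fun b' : ℝ => c / b') (-(c / b ^ 2)) b := by
    simpa [div_eq_mul_inv, mul_comm] using (hasDerivAt_inv hbne).const_mul c
  have h4 : HasDerivAt (fun b' : ℝ => genLaguerre (ν - 1) k (c / b'))
      (D (ν - 1) k (c / b) * (-(c / b ^ 2))) b :=
    (hasDerivAt_genLaguerre (ν - 1) k (c / b)).comp b h3
  have h5 : HasDerivAt (fun b' : ℝ => Real.exp (-(c / b')))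
      (Real.exp (-(c / b)) * (c / b ^ 2)) b := by
    have := (Real.hasDerivAt_exp (-(c / b))).comp b h3.neg
    simp only [neg_neg] at this
    exact this
  have hprod := (((h1.const_mul (k.factorial : ℝ)).mul h2).mul h4).mul h5
  have hfun : (fun b' : ℝ => Phi ν c k b')
      = fun b' => (k.factorial : ℝ) * (π / b') ^ ν * b' ^ (-(k : ℤ))
          * genLaguerre (ν - 1) k (c / b') * Real.exp (-(c / b')) := rfl
  rw [hfun]
  refine hprod.congr_deriv ?_
  symm
  simp only [Pi.mul_apply]
  have hrec := lag_rec (ν - 1) k (c / b)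
  have hfact : (((k+1).factorial : ℕ) : ℝ) = ((k:ℝ) + 1) * (k.factorial : ℝ) := by
    rw [Nat.factorial_succ]; push_cast; ring
  have hzp : b ^ (-((k:ℤ)+1)) = b ^ (-(k : ℤ)) * b⁻¹ := by
    rw [show -((k:ℤ)+1) = -(k:ℤ) - 1 by ring, zpow_sub_one₀ hbne]
  have hc2 : c / b ^ 2 = (c / b) * b⁻¹ := by
    rw [pow_two, ← div_div, div_eq_mul_inv]
  have hν : ν / b = ν * b⁻¹ := div_eq_mul_inv ν b
  unfold Phi
  rw [hfact]
  push_cast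
  rw [hzp, hc2, hν]
  linear_combination (-(k.factorial : ℝ)) * ((π / b) ^ ν) * (b ^ (-(k:ℤ))) * b⁻¹
    * Real.exp (-(c/b)) * hrec


end LagAux

section FourierSide

variable {V : Type*} [NormedAddCommGroup V] [InnerProductSpace ℝ V] [FiniteDimensional ℝ V]
  [MeasurableSpace V] [BorelSpace V]

lemma norm_phase_smul (t : ℝ) (r : ℝ) :
    ‖Complex.exp ((t : ℂ) * Complex.I) • ((r : ℝ) : ℂ)‖ = |r| := by
  rw [norm_smul, Complex.norm_exp_ofReal_mul_I, one_mul, Complex.norm_real, Real.norm_eq_abs]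

lemma hasDerivAt_fourier_gaussian (k : ℕ) (u : V) {b : ℝ} (hb : 0 < b) :
    HasDerivAt (fun b' : ℝ =>
        𝓕 (fun v : V => (((‖v‖ ^ 2) ^ k * Real.exp (-b' * ‖v‖ ^ 2) : ℝ) : ℂ)) u)
      (-𝓕 (fun v : V => (((‖v‖ ^ 2) ^ (k + 1) * Real.exp (-b * ‖v‖ ^ 2) : ℝ) : ℂ)) u) b := by
  simp_rw [Real.fourier_eq']
  have hph : Continuous fun v : V => Complex.exp (((-2 * π * ⟪v, u⟫ : ℝ) : ℂ) * Complex.I) := by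
    apply Complex.continuous_exp.comp
    exact (Complex.continuous_ofReal.comp
      (continuous_const.mul (continuous_id.inner continuous_const))).mul continuous_const
  have key := hasDerivAt_integral_of_dominated_loc_of_deriv_le
    (F := fun b' : ℝ => fun v : V =>
      Complex.exp (((-2 * π * ⟪v, u⟫ : ℝ) : ℂ) * Complex.I)
        • (((‖v‖ ^ 2) ^ k * Real.exp (-b' * ‖v‖ ^ 2) : ℝ) : ℂ))
    (F' := fun b' : ℝ => fun v : V =>
      Complex.exp (((-2 * π * ⟪v, u⟫ : ℝ) : ℂ) * Complex.I)
        • ((-((‖v‖ ^ 2) ^ (k + 1) * Real.exp (-b' * ‖v‖ ^ 2)) : ℝ) : ℂ))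
    (bound := fun v : V => ‖v‖ ^ (2 * (k + 1)) * Real.exp (-(b / 2) * ‖v‖ ^ 2))
    (μ := volume) (x₀ := b) (s := ball b (b / 2)) (ball_mem_nhds b (half_pos hb))
    ?_ ?_ ?_ ?_ ?_ ?_
  have hph : Continuous fun v : V => Complex.exp (((-2 * π * ⟪v, u⟫ : ℝ) : ℂ) * Complex.I) := by
    apply Complex.continuous_exp.comp
    exact (Complex.continuous_ofReal.comp
      (continuous_const.mul (continuous_id.inner continuous_const))).mul continuous_const
  · refine key.2.congr_deriv ?_
    symm
    rw [← integral_neg]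
    congr 1
    funext v
    rw [← smul_neg]
    congr 1
    push_cast
    ring
  · refine Filter.Eventually.of_forall fun b' => Continuous.aestronglyMeasurable ?_
    exact hph.smul (Complex.continuous_ofReal.comp (by fun_prop))
  · -- integrability at b
    refine Integrable.mono' ((integrable_pow_mul_exp_neg_mul_sq_norm (2 * k) hb).const_mul 1) ?_ ?_
    · exact Continuous.aestronglyMeasurable
        (hph.smul (Complex.continuous_ofReal.comp (by fun_prop)))
    · refine Filter.Eventually.of_forall fun v => ?_
      show ‖_ • _‖ ≤ 1 * (‖v‖ ^ (2 * k) * Real.exp (-b * ‖v‖ ^ 2))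
      rw [norm_phase_smul, one_mul, abs_of_nonneg (by positivity), pow_mul]
  · exact Continuous.aestronglyMeasurable
      (hph.smul (Complex.continuous_ofReal.comp (by fun_prop)))
  · refine Filter.Eventually.of_forall fun v => fun b' hb' => ?_
    have hdist : |b' - b| < b / 2 := by simpa [Real.dist_eq] using hb'
    have hb2 : b / 2 ≤ b' := by
      have h := abs_lt.mp hdist
      linarith [h.1]
    show ‖_ • _‖ ≤ ‖v‖ ^ (2 * (k + 1)) * Real.exp (-(b / 2) * ‖v‖ ^ 2)
    rw [norm_phase_smul, abs_neg, abs_of_nonneg (by positivity), pow_mul]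
    have hexp : Real.exp (-b' * ‖v‖ ^ 2) ≤ Real.exp (-(b / 2) * ‖v‖ ^ 2) :=
      Real.exp_le_exp.mpr (by nlinarith [sq_nonneg ‖v‖])
    exact mul_le_mul_of_nonneg_left hexp (by positivity)
  · exact integrable_pow_mul_exp_neg_mul_sq_norm (2 * (k + 1)) (half_pos hb)
  · refine Filter.Eventually.of_forall fun v => fun b' _ => ?_
    have hlin : HasDerivAt (fun b'' : ℝ => -b'' * ‖v‖ ^ 2) (-‖v‖ ^ 2) b' := by
      have := ((hasDerivAt_mul_const (‖v‖ ^ 2)).neg (x := b'))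
      simp only [neg_mul]
      exact this
    have hexp := (Real.hasDerivAt_exp (-b' * ‖v‖ ^ 2)).comp b' hlin
    have hr := hexp.const_mul ((‖v‖ ^ 2) ^ k)
    have hC := hr.ofReal_comp
    have := hC.const_smul (Complex.exp (((-2 * π * ⟪v, u⟫ : ℝ) : ℂ) * Complex.I))
    convert this using 1
    show Complex.exp (((-2 * π * ⟪v, u⟫ : ℝ) : ℂ) * Complex.I)
        • ((-((‖v‖ ^ 2) ^ (k + 1) * Real.exp (-b' * ‖v‖ ^ 2)) : ℝ) : ℂ) = _
    congr 1
    push_cast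
    ring
    rfl


end FourierSide

theorem fourier_pow_gaussian (n k : ℕ) :
    ∀ b : ℝ, 0 < b → ∀ u : EuclideanSpace ℝ (Fin n),
      𝓕 (fun v : EuclideanSpace ℝ (Fin n) =>
          (((‖v‖ ^ 2) ^ k * Real.exp (-b * ‖v‖ ^ 2) : ℝ) : ℂ)) u
        = ((LagAux.Phi ((n : ℝ) / 2) (π ^ 2 * ‖u‖ ^ 2) k b : ℝ) : ℂ) := by
  induction k with
  | zero =>
    intro b hb u
    have h := fourier_gaussian_innerProductSpace
      (V := EuclideanSpace ℝ (Fin n)) (b := (b : ℂ)) (by simpa using hb) u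
    have hfun : (fun v : EuclideanSpace ℝ (Fin n) =>
        (((‖v‖ ^ 2) ^ 0 * Real.exp (-b * ‖v‖ ^ 2) : ℝ) : ℂ))
        = fun v : EuclideanSpace ℝ (Fin n) => Complex.exp (-(b : ℂ) * (‖v‖ : ℂ) ^ 2) := by
      funext v
      rw [pow_zero, one_mul, Complex.ofReal_exp]
      norm_num
    rw [hfun, h]
    unfold LagAux.Phi
    rw [LagAux.genLaguerre_zero]
    have hrank : (Module.finrank ℝ (EuclideanSpace ℝ (Fin n)) : ℂ) = (n : ℂ) := by
      rw [finrank_euclideanSpace_fin]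
    have hcpow : ((π / b : ℝ) : ℂ) ^ ((Module.finrank ℝ (EuclideanSpace ℝ (Fin n)) : ℂ) / 2)
        = (((π / b) ^ ((n : ℝ) / 2) : ℝ) : ℂ) := by
      rw [hrank, Complex.ofReal_cpow (le_of_lt (div_pos Real.pi_pos hb))]
      push_cast
      ring_nf
    push_cast
    rw [← hcpow]
    simp [Complex.ofReal_div, neg_div]
  | succ k ih =>
    intro b hb u
    have hA := hasDerivAt_fourier_gaussian (V := EuclideanSpace ℝ (Fin n)) k u hb
    have hB := (LagAux.hasDerivAt_Phi ((n : ℝ) / 2) (π ^ 2 * ‖u‖ ^ 2) k hb).ofReal_comp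
    have hEq : (fun b' : ℝ => 𝓕 (fun v : EuclideanSpace ℝ (Fin n) =>
          (((‖v‖ ^ 2) ^ k * Real.exp (-b' * ‖v‖ ^ 2) : ℝ) : ℂ)) u)
        =ᶠ[nhds b] fun b' : ℝ =>
          ((LagAux.Phi ((n : ℝ) / 2) (π ^ 2 * ‖u‖ ^ 2) k b' : ℝ) : ℂ) := by
      filter_upwards [isOpen_Ioi.mem_nhds hb] with b' hb'
      exact ih b' hb' u
    have hA' : HasDerivAt (fun b' : ℝ =>
          ((LagAux.Phi ((n : ℝ) / 2) (π ^ 2 * ‖u‖ ^ 2) k b' : ℝ) : ℂ))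
        (-𝓕 (fun v : EuclideanSpace ℝ (Fin n) =>
          (((‖v‖ ^ 2) ^ (k + 1) * Real.exp (-b * ‖v‖ ^ 2) : ℝ) : ℂ)) u) b :=
      hA.congr_of_eventuallyEq hEq.symm
    have huniq := hA'.unique hB
    have := neg_inj.mp (huniq.trans (by push_cast; ring))
    · exact this


/-- The Fourier transform of `x ↦ k! π^{-k} L_k^{n/2-1}(π‖x‖²) e^{-π‖x‖²}` on `ℝⁿ`
is `u ↦ ‖u‖^{2k} e^{-π‖u‖²}`. -/
theorem fourier_laguerre_gaussian (n : ℕ) (k : ℕ) :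
    𝓕 (fun x : EuclideanSpace ℝ (Fin n) =>
        ((Nat.factorial k : ℝ) * π ^ (-(k : ℤ)) *
          genLaguerre ((n : ℝ) / 2 - 1) k (π * ‖x‖ ^ 2) * Real.exp (-π * ‖x‖ ^ 2) : ℂ)) =
      fun u : EuclideanSpace ℝ (Fin n) =>
        ((‖u‖ ^ (2 * k) * Real.exp (-π * ‖u‖ ^ 2) : ℝ) : ℂ) := by
  have hπ := Real.pi_pos
  set h : EuclideanSpace ℝ (Fin n) → ℂ :=
    fun v => (((‖v‖ ^ 2) ^ k * Real.exp (-π * ‖v‖ ^ 2) : ℝ) : ℂ) with hh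
  have hmain := fourier_pow_gaussian n k π hπ
  have hPhi : ∀ u : EuclideanSpace ℝ (Fin n),
      LagAux.Phi ((n : ℝ) / 2) (π ^ 2 * ‖u‖ ^ 2) k π
        = (k.factorial : ℝ) * π ^ (-(k : ℤ)) * genLaguerre ((n : ℝ) / 2 - 1) k (π * ‖u‖ ^ 2)
            * Real.exp (-π * ‖u‖ ^ 2) := by
    intro u
    unfold LagAux.Phi
    rw [div_self hπ.ne', Real.one_rpow,
      show π ^ 2 * ‖u‖ ^ 2 / π = π * ‖u‖ ^ 2 by field_simp, neg_mul]
    ring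
  -- 𝓕 h equals the integrand of the statement
  have hFh : 𝓕 h = fun u : EuclideanSpace ℝ (Fin n) =>
      ((Nat.factorial k : ℝ) * π ^ (-(k : ℤ)) *
          genLaguerre ((n : ℝ) / 2 - 1) k (π * ‖u‖ ^ 2) * Real.exp (-π * ‖u‖ ^ 2) : ℂ) := by
    funext u
    rw [hh, hmain u, hPhi u]
    push_cast
    ring
  rw [← hFh]
  -- integrability of h
  have hint : Integrable h := by
    have h1 : Integrable (fun v : EuclideanSpace ℝ (Fin n) =>
        (‖v‖ ^ 2) ^ k * Real.exp (-π * ‖v‖ ^ 2)) := by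
      have := integrable_pow_mul_exp_neg_mul_sq_norm
        (V := EuclideanSpace ℝ (Fin n)) (2 * k) hπ
      simpa [pow_mul] using this
    exact h1.ofReal
  -- integrability of 𝓕 h
  have hint2 : Integrable (𝓕 h) := by
    rw [hFh]
    have h2 : Integrable (fun u : EuclideanSpace ℝ (Fin n) =>
        (k.factorial : ℝ) * π ^ (-(k : ℤ)) * genLaguerre ((n : ℝ) / 2 - 1) k (π * ‖u‖ ^ 2)
          * Real.exp (-π * ‖u‖ ^ 2)) := by
      have hexp : (fun u : EuclideanSpace ℝ (Fin n) =>
          (k.factorial : ℝ) * π ^ (-(k : ℤ)) * genLaguerre ((n : ℝ) / 2 - 1) k (π * ‖u‖ ^ 2)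
            * Real.exp (-π * ‖u‖ ^ 2))
          = fun u => ∑ j ∈ Finset.range (k + 1),
              ((k.factorial : ℝ) * π ^ (-(k : ℤ)) * LagAux.C ((n : ℝ) / 2 - 1) k j * π ^ j)
                * (‖u‖ ^ (2 * j) * Real.exp (-π * ‖u‖ ^ 2)) := by
        funext u
        rw [LagAux.genLaguerre_eq, Finset.mul_sum, Finset.sum_mul]
        refine Finset.sum_congr rfl fun j _ => ?_
        rw [mul_pow, pow_mul]
        ring
      rw [hexp]
      exact integrable_finset_sum _ fun j _ =>
        (integrable_pow_mul_exp_neg_mul_sq_norm (2 * j) hπ).const_mul _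
    have h3 := Complex.ofRealCLM.integrable_comp h2
    refine h3.congr (Filter.Eventually.of_forall fun u => ?_)
    simp only [Complex.ofRealCLM_apply]
    push_cast
    ring
  -- continuity of h
  have hcont : Continuous h := by
    rw [hh]
    exact Complex.continuous_ofReal.comp (by fun_prop)
  have hinv := hcont.fourierInv_fourier_eq hint hint2
  funext u
  have : 𝓕 (𝓕 h) u = 𝓕⁻ (𝓕 h) (-u) := by
    rw [Real.fourierInv_eq_fourier_neg, neg_neg]
  rw [this, hinv, hh]
  push_cast [pow_mul, norm_neg]
  ring
end

section
/- A polynomial p ∈ R[r] is nonnegative on the interval [1, ∞) if and only if it can be written as p(r) = s1(r) + (r - 1)s2(r) where s1 and s2 are sums of squares of polynomials. -/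
open Polynomial

private lemma isSumSq_mul_self_mul {R : Type*} [CommRing R] (a : R) {S : R} (h : IsSumSq S) :
    IsSumSq (a * a * S) := by
  induction h with
  | zero => simpa using IsSumSq.zero
  | @sq_add b T hT ih =>
    have : a * a * (b * b + T) = (a * b) * (a * b) + a * a * T := by ring
    rw [this]; exact IsSumSq.sq_add _ ih

private lemma isSumSq_C_of_nonneg {c : ℝ} (hc : 0 ≤ c) : IsSumSq (C c : Polynomial ℝ) := by
  have : (C c : Polynomial ℝ) = C (Real.sqrt c) * C (Real.sqrt c) + 0 := by
    rw [← C_mul, Real.mul_self_sqrt hc, add_zero]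
  rw [this]
  exact IsSumSq.sq_add _ IsSumSq.zero

private lemma isSumSq_eval {s : Polynomial ℝ} (h : IsSumSq s) (r : ℝ) : IsSumSq (s.eval r) := by
  induction h with
  | zero => simpa using IsSumSq.zero
  | @sq_add a S hS ih =>
    rw [eval_add, eval_mul]
    exact IsSumSq.sq_add _ ih

private lemma sos_of_nonneg : ∀ n : ℕ, ∀ p : Polynomial ℝ, p.natDegree = n →
    (∀ r : ℝ, 1 ≤ r → 0 ≤ p.eval r) →
    ∃ s₁ s₂ : Polynomial ℝ, IsSumSq s₁ ∧ IsSumSq s₂ ∧ p = s₁ + (X - 1) * s₂ := by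
  intro n
  induction n using Nat.strong_induction_on with
  | _ n ih =>
  intro p hn hp
  by_cases hp0 : p = 0
  · exact ⟨0, 0, IsSumSq.zero, IsSumSq.zero, by simp [hp0]⟩
  by_cases hdeg : p.natDegree = 0
  · refine ⟨p, 0, ?_, IsSumSq.zero, by ring⟩
    have hpc := Polynomial.eq_C_of_natDegree_eq_zero hdeg
    have hc : 0 ≤ p.coeff 0 := by
      have h1 := hp 1 le_rfl
      rw [hpc] at h1
      simpa using h1
    rw [hpc]
    exact isSumSq_C_of_nonneg hc
  have hdpos : 0 < p.degree := natDegree_pos_iff_degree_pos.mp (Nat.pos_of_ne_zero hdeg)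
  have hlc : 0 ≤ p.leadingCoeff := by
    by_contra hlt
    push_neg at hlt
    have hbot := Polynomial.tendsto_atBot_of_leadingCoeff_nonpos p hdpos hlt.le
    have h1 := hbot.eventually (Filter.eventually_le_atBot (-1 : ℝ))
    have h2 := Filter.eventually_ge_atTop (1 : ℝ)
    obtain ⟨x, hxle, hx1⟩ := (h1.and h2).exists
    linarith [hp x hx1]
  have htop := Polynomial.tendsto_atTop_of_leadingCoeff_nonneg p hdpos hlc
  obtain ⟨R, hR⟩ := Filter.eventually_atTop.mp
    (htop.eventually (Filter.eventually_ge_atTop (eval 1 p)))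
  set b := max R 1 with hb
  obtain ⟨μ, hμmem, hμmin⟩ := isCompact_Icc.exists_isMinOn
    (⟨1, le_rfl, le_max_right R 1⟩ : (Set.Icc (1:ℝ) b).Nonempty)
    (Polynomial.continuous p).continuousOn
  have hμ1 : 1 ≤ μ := hμmem.1
  have hmin : ∀ x, 1 ≤ x → eval μ p ≤ eval x p := by
    intro x hx
    rcases le_or_gt x b with hxb | hxb
    · exact hμmin ⟨hx, hxb⟩
    · have hRx : R ≤ x := le_trans (le_max_left R 1) hxb.le
      exact le_trans (hμmin ⟨le_rfl, le_max_right R 1⟩) (hR x hRx)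
  set m := eval μ p with hm
  have hm0 : 0 ≤ m := hp μ hμ1
  set q := p - C m with hq
  have hpq : p = q + C m := by rw [hq]; ring
  have hqnn : ∀ x, 1 ≤ x → 0 ≤ eval x q := by
    intro x hx
    have := hmin x hx
    simp only [hq, eval_sub, eval_C]
    linarith
  have hqμ : q.IsRoot μ := by simp [hq, IsRoot, hm]
  have hq0 : q ≠ 0 := by
    intro h
    apply hdeg
    have : p = C m := by rw [hpq, h, zero_add]
    rw [this, natDegree_C]
  have hqdeg : q.natDegree = n := by rw [hq, natDegree_sub_C, hn]
  rcases eq_or_lt_of_le hμ1 with hμeq | hμlt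
  · -- μ = 1
    obtain ⟨r, hr⟩ := dvd_iff_isRoot.mpr hqμ
    rw [← hμeq] at hr
    have hX1 : (X - C (1:ℝ)) = X - 1 := by rw [C_1]
    rw [hX1] at hr
    have hr0 : r ≠ 0 := by
      intro h; exact hq0 (by rw [hr, h, mul_zero])
    have hX10 : (X - 1 : Polynomial ℝ) ≠ 0 := by
      rw [← hX1]; exact X_sub_C_ne_zero 1
    have hrdeg : r.natDegree = n - 1 ∧ 1 ≤ n := by
      have h1 := natDegree_mul hX10 hr0
      rw [← hr, hqdeg, ← hX1, natDegree_X_sub_C] at h1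
      omega
    have hrnn : ∀ x, 1 ≤ x → 0 ≤ eval x r := by
      intro x hx
      rcases eq_or_lt_of_le hx with h1 | h1
      · have hc : Filter.Tendsto (fun y => eval y r) (nhdsWithin 1 (Set.Ioi 1))
            (nhds (eval 1 r)) :=
          ((Polynomial.continuous r).continuousAt).continuousWithinAt
        rw [← h1]
        refine ge_of_tendsto hc ?_
        filter_upwards [self_mem_nhdsWithin] with y hy
        have hy1 : (1:ℝ) < y := hy
        have hqy := hqnn y hy1.le
        rw [hr] at hqy
        simp only [eval_mul, eval_sub, eval_X, eval_one] at hqy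
        nlinarith
      · have hqy := hqnn x hx
        rw [hr] at hqy
        simp only [eval_mul, eval_sub, eval_X, eval_one] at hqy
        nlinarith
    obtain ⟨s₁, s₂, hs₁, hs₂, hrs⟩ := ih (n - 1) (by omega) r (by omega) hrnn
    refine ⟨C m + (X - 1) * (X - 1) * s₂, s₁, ?_, hs₁, ?_⟩
    · exact IsSumSq.add (isSumSq_C_of_nonneg hm0) (isSumSq_mul_self_mul _ hs₂)
    · rw [hpq, hr, hrs]; ring
  · -- 1 < μ
    obtain ⟨r1, hr1⟩ := dvd_iff_isRoot.mpr hqμ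
    have hloc : IsLocalMin (fun x => eval x q) μ := by
      have hmem : Set.Ioi (1:ℝ) ∈ nhds μ := isOpen_Ioi.mem_nhds hμlt
      refine Filter.eventually_of_mem hmem fun y hy => ?_
      have hy1 : (1:ℝ) < y := hy
      have := hmin y hy1.le
      simp only [hq, eval_sub, eval_C]
      linarith
    have hderiv : eval μ (derivative q) = 0 :=
      hloc.hasDerivAt_eq_zero (q.hasDerivAt μ)
    have hr1μ : r1.IsRoot μ := by
      have hd : derivative q = r1 + (X - C μ) * derivative r1 := by
        rw [hr1, derivative_mul]
        simp [derivative_X, derivative_C]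
      rw [IsRoot.def]
      have h2 := hderiv
      rw [hd] at h2
      simpa using h2
    obtain ⟨r, hr⟩ := dvd_iff_isRoot.mpr hr1μ
    have hqr : q = (X - C μ) * ((X - C μ) * r) := by rw [hr1, hr]
    have hr0 : r ≠ 0 := by
      intro h
      exact hq0 (by rw [hqr, h, mul_zero, mul_zero])
    have hXμ0 : (X - C μ : Polynomial ℝ) ≠ 0 := X_sub_C_ne_zero μ
    have hrdeg : r.natDegree = n - 2 ∧ 2 ≤ n := by
      have h1 := natDegree_mul hXμ0 (mul_ne_zero hXμ0 hr0)
      rw [natDegree_mul hXμ0 hr0] at h1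
      rw [← hqr, hqdeg, natDegree_X_sub_C] at h1
      omega
    have hrnn : ∀ x, 1 ≤ x → 0 ≤ eval x r := by
      intro x hx
      rcases eq_or_ne x μ with h1 | h1
      · have hc : Filter.Tendsto (fun y => eval y r) (nhdsWithin μ (Set.Ioi μ))
            (nhds (eval μ r)) :=
          ((Polynomial.continuous r).continuousAt).continuousWithinAt
        rw [h1]
        refine ge_of_tendsto hc ?_
        filter_upwards [self_mem_nhdsWithin] with y hy
        have hyμ : μ < y := hy
        have hqy := hqnn y (le_trans hμ1 hyμ.le)
        rw [hqr] at hqy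
        simp only [eval_mul, eval_sub, eval_X, eval_C] at hqy
        nlinarith [mul_pos (sub_pos.mpr hyμ) (sub_pos.mpr hyμ)]
      · have hqy := hqnn x hx
        rw [hqr] at hqy
        simp only [eval_mul, eval_sub, eval_X, eval_C] at hqy
        have hne : 0 < (x - μ) * (x - μ) := by
          rcases lt_or_gt_of_ne h1 with h | h
          · nlinarith
          · nlinarith
        nlinarith
    obtain ⟨s₁, s₂, hs₁, hs₂, hrs⟩ := ih (n - 2) (by omega) r (by omega) hrnn
    refine ⟨C m + (X - C μ) * (X - C μ) * s₁, (X - C μ) * (X - C μ) * s₂, ?_, ?_, ?_⟩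
    · exact IsSumSq.add (isSumSq_C_of_nonneg hm0) (isSumSq_mul_self_mul _ hs₁)
    · exact isSumSq_mul_self_mul _ hs₂
    · rw [hpq, hqr, hrs]; ring

/-- Pólya–Szegő: a real polynomial is nonnegative on `[1, ∞)` iff it can be
written as `s₁(r) + (r-1)·s₂(r)` with `s₁, s₂` sums of squares. -/
theorem nonneg_on_Ici_iff_sos (p : Polynomial ℝ) :
    (∀ r : ℝ, 1 ≤ r → 0 ≤ p.eval r) ↔
      ∃ s₁ s₂ : Polynomial ℝ, IsSumSq s₁ ∧ IsSumSq s₂ ∧ p = s₁ + (X - 1) * s₂ := by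
  constructor
  · exact sos_of_nonneg p.natDegree p rfl
  · rintro ⟨s₁, s₂, hs₁, hs₂, rfl⟩ r hr
    simp only [eval_add, eval_mul, eval_sub, eval_X, eval_one]
    have h1 := (isSumSq_eval hs₁ r).nonneg
    have h2 := (isSumSq_eval hs₂ r).nonneg
    have : 0 ≤ (r - 1) * eval r s₂ := mul_nonneg (by linarith) h2
    linarith
end

section
/- A real polynomial s of degree at most 2d is a sum of squares if and only if there exists a positive semidefinite (d+1)×(d+1) real matrix Q with s(r) = b(r)^T Q b(r), where b(r) = (1, r, …, r^d). -/
open Polynomial Matrix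

/-- Helper: any sum of squares is a finite indexed sum of squares. -/
lemma isSumSq_exists_fin_sum {R : Type*} [AddCommMonoid R] [Mul R] {s : R}
    (h : IsSumSq s) : ∃ (n : ℕ) (f : Fin n → R), s = ∑ i, f i * f i := by
  induction h with
  | zero => exact ⟨0, Fin.elim0, by simp⟩
  | sq_add a _ ih =>
    obtain ⟨n, f, rfl⟩ := ih
    exact ⟨n + 1, Fin.cons a f, by simp [Fin.sum_univ_succ]⟩

/-- Helper: in a sum of squares of real polynomials there is no cancellation of degrees. -/
lemma two_mul_natDegree_le_of_sum_sq {n : ℕ} (f : Fin n → Polynomial ℝ) (k : Fin n) :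
    2 * (f k).natDegree ≤ (∑ i, f i * f i).natDegree := by
  by_cases hk : f k = 0
  · simp [hk]
  classical
  set T : Finset (Fin n) := Finset.univ.filter (fun i => f i ≠ 0) with hT
  have hkT : k ∈ T := by simp [hT, hk]
  set D : ℕ := T.sup (fun i => (f i).natDegree) with hD
  obtain ⟨i0, hi0T, hi0⟩ := Finset.exists_mem_eq_sup T ⟨k, hkT⟩ (fun i => (f i).natDegree)
  have hi0' : D = (f i0).natDegree := hi0
  have hi0ne : f i0 ≠ 0 := by simpa [hT] using hi0T
  have key : ∀ i : Fin n, 0 ≤ (f i * f i).coeff (2 * D) := by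
    intro i
    by_cases hi : f i = 0
    · simp [hi]
    · have hle : (f i).natDegree ≤ D :=
        Finset.le_sup (f := fun i => (f i).natDegree) (by simp [hT, hi] : i ∈ T)
      rcases lt_or_eq_of_le hle with hlt | heq
      · have hlt2 : (f i * f i).natDegree < 2 * D := by
          calc (f i * f i).natDegree ≤ (f i).natDegree + (f i).natDegree :=
                natDegree_mul_le
            _ < 2 * D := by omega
        simp [coeff_eq_zero_of_natDegree_lt hlt2]
      · have h1 : (f i * f i).coeff (2 * D) = (f i).leadingCoeff * (f i).leadingCoeff := by
          rw [show 2 * D = (f i).natDegree + (f i).natDegree by omega]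
          exact coeff_mul_degree_add_degree _ _
        rw [h1]
        exact mul_self_nonneg _
  have hpos : 0 < (f i0 * f i0).coeff (2 * D) := by
    have h1 : (f i0 * f i0).coeff (2 * D) = (f i0).leadingCoeff * (f i0).leadingCoeff := by
      rw [show 2 * D = (f i0).natDegree + (f i0).natDegree by omega]
      exact coeff_mul_degree_add_degree _ _
    rw [h1]
    exact mul_self_pos.mpr (leadingCoeff_ne_zero.mpr hi0ne)
  have hsum : 0 < (∑ i, f i * f i).coeff (2 * D) := by
    rw [finset_sum_coeff]
    calc (0 : ℝ) < (f i0 * f i0).coeff (2 * D) := hpos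
      _ ≤ ∑ i, (f i * f i).coeff (2 * D) :=
        Finset.single_le_sum (fun i _ => key i) (Finset.mem_univ i0)
  have h2D : 2 * D ≤ (∑ i, f i * f i).natDegree :=
    le_natDegree_of_ne_zero (ne_of_gt hsum)
  have hkD : (f k).natDegree ≤ D :=
    Finset.le_sup (f := fun i => (f i).natDegree) hkT
  omega

/-- Helper: expanding a quadratic form given by a sum of outer products. -/
lemma outer_sum_quadform {m n : ℕ} (a : Fin m → Fin n → ℝ) (v : Fin n → ℝ) :
    ∑ i : Fin n, ∑ j : Fin n, v i * (∑ k : Fin m, a k i * a k j) * v j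
      = ∑ k : Fin m, (∑ i : Fin n, a k i * v i) * (∑ j : Fin n, a k j * v j) := by
  have h1 : ∀ i j, v i * (∑ k : Fin m, a k i * a k j) * v j
      = ∑ k : Fin m, (a k i * v i) * (a k j * v j) := by
    intro i j
    rw [Finset.mul_sum, Finset.sum_mul]
    exact Finset.sum_congr rfl fun k _ => by ring
  have h2 : ∀ k, (∑ i : Fin n, a k i * v i) * (∑ j : Fin n, a k j * v j)
      = ∑ i : Fin n, ∑ j : Fin n, (a k i * v i) * (a k j * v j) :=
    fun k => Finset.sum_mul_sum _ _ _ _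
  simp_rw [h1, h2]
  calc ∑ i : Fin n, ∑ j : Fin n, ∑ k : Fin m, (a k i * v i) * (a k j * v j)
      = ∑ i : Fin n, ∑ k : Fin m, ∑ j : Fin n, (a k i * v i) * (a k j * v j) :=
        Finset.sum_congr rfl fun i _ => Finset.sum_comm
    _ = ∑ k : Fin m, ∑ i : Fin n, ∑ j : Fin n, (a k i * v i) * (a k j * v j) :=
        Finset.sum_comm

/-- A real polynomial `s` of degree at most `2d` is a sum of squares iff
`s(r) = b(r)ᵀ Q b(r)` for a positive semidefinite matrix `Q`, where
`b(r) = (1, r, …, r^d)`. -/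
theorem sos_iff_psd (d : ℕ) (s : Polynomial ℝ) (hdeg : s.natDegree ≤ 2 * d) :
    IsSumSq s ↔
      ∃ Q : Matrix (Fin (d + 1)) (Fin (d + 1)) ℝ, Q.PosSemidef ∧
        ∀ r : ℝ, s.eval r = ∑ i : Fin (d + 1), ∑ j : Fin (d + 1), r ^ (i : ℕ) * Q i j * r ^ (j : ℕ) := by
  constructor
  · intro hs
    obtain ⟨n, f, rfl⟩ := isSumSq_exists_fin_sum hs
    have hdk : ∀ k : Fin n, (f k).natDegree ≤ d := by
      intro k
      have := two_mul_natDegree_le_of_sum_sq f k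
      omega
    refine ⟨fun (i j : Fin (d + 1)) => ∑ k : Fin n, (f k).coeff (i : ℕ) * (f k).coeff (j : ℕ),
      Matrix.posSemidef_iff_dotProduct_mulVec.mpr ⟨?_, ?_⟩, ?_⟩
    · refine Matrix.IsHermitian.ext fun i j => ?_
      simp only [star_trivial]
      exact Finset.sum_congr rfl fun k _ => mul_comm _ _
    · intro x
      show (0 : ℝ) ≤ dotProduct (star x)
        (Matrix.mulVec (fun (i j : Fin (d + 1)) => ∑ k : Fin n, (f k).coeff (i : ℕ) * (f k).coeff (j : ℕ)) x)
      have hexp : dotProduct (star x)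
          (Matrix.mulVec (fun (i j : Fin (d + 1)) => ∑ k : Fin n, (f k).coeff (i : ℕ) * (f k).coeff (j : ℕ)) x)
          = ∑ i : Fin (d + 1), ∑ j : Fin (d + 1),
              x i * (∑ k : Fin n, (f k).coeff (i : ℕ) * (f k).coeff (j : ℕ)) * x j := by
        simp only [star_trivial, dotProduct, Matrix.mulVec]
        refine Finset.sum_congr rfl fun i _ => ?_
        rw [Finset.mul_sum]
        exact Finset.sum_congr rfl fun j _ => (mul_assoc _ _ _).symm
      rw [hexp, outer_sum_quadform (fun k i => (f k).coeff i) x]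
      exact Finset.sum_nonneg fun k _ => mul_self_nonneg _
    · intro r
      show eval r (∑ i : Fin n, f i * f i)
        = ∑ i : Fin (d + 1), ∑ j : Fin (d + 1),
            r ^ (i : ℕ) * (∑ k : Fin n, (f k).coeff (i : ℕ) * (f k).coeff (j : ℕ)) * r ^ (j : ℕ)
      have heval : ∀ k : Fin n,
          (f k).eval r = ∑ i : Fin (d + 1), (f k).coeff i * r ^ (i : ℕ) := by
        intro k
        rw [eval_eq_sum_range' (lt_of_le_of_lt (hdk k) (Nat.lt_succ_self d)),
          ← Fin.sum_univ_eq_sum_range]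
      rw [outer_sum_quadform (fun k i => (f k).coeff i) (fun i => r ^ (i : ℕ)),
        eval_finset_sum]
      exact Finset.sum_congr rfl fun k _ => by rw [eval_mul, heval k]
  · rintro ⟨Q, hQ, hs⟩
    obtain ⟨B, rfl⟩ : ∃ B : Matrix (Fin (d + 1)) (Fin (d + 1)) ℝ, Q = Bᴴ * B := by
      open scoped MatrixOrder Matrix.Norms.L2Operator in
      exact CStarAlgebra.nonneg_iff_eq_star_mul_self.mp hQ.nonneg
    set p : Fin (d + 1) → Polynomial ℝ :=
      fun k => ∑ i : Fin (d + 1), C (B k i) * X ^ (i : ℕ) with hp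
    have hpe : ∀ (k) (r : ℝ), (p k).eval r = ∑ i : Fin (d + 1), B k i * r ^ (i : ℕ) := by
      intro k r
      simp [hp, eval_finset_sum]
    have hQij : ∀ i j, (Bᴴ * B) i j = ∑ k : Fin (d + 1), B k i * B k j := by
      intro i j
      simp [Matrix.mul_apply, Matrix.conjTranspose_apply]
    have hst : s = ∑ k : Fin (d + 1), p k * p k := by
      apply Polynomial.funext
      intro r
      rw [hs r, eval_finset_sum]
      simp_rw [eval_mul, hpe, hQij]
      exact outer_sum_quadform (fun k i => B k i) (fun i => r ^ (i : ℕ))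
    rw [hst]
    exact IsSumSq.sum_mul_self _ _
end
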